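/- Let x be a unit eigenvector corresponding to the spectral radius of a graph G with at least one edge. Then every entry of x satisfies |x_i| ≤ 2^{-1/2}. -/

import Mathlib

open Matrix Finset

def IsSpecRad {n : ℕ} (A : Matrix (Fin n) (Fin n) ℝ) (μ : ℝ) : Prop :=
  Module.End.HasEigenvalue A.mulVecLin μ ∧
    ∀ ν : ℝ, Module.End.HasEigenvalue A.mulVecLin ν → ν ≤ μ

lemma rayleigh_le {n : ℕ} (A : Matrix (Fin n) (Fin n) ℝ) (hA : A.IsHermitian) (μ : ℝ)
    (hμ : IsSpecRad A μ) (v : Fin n → ℝ) : v ⬝ᵥ A *ᵥ v ≤ μ * (v ⬝ᵥ v) := by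
  have heig : ∀ j, hA.eigenvalues j ≤ μ := by
    intro j
    apply hμ.2
    apply Module.End.hasEigenvalue_of_hasEigenvector (x := ⇑(hA.eigenvectorBasis j))
    constructor
    · rw [Module.End.mem_eigenspace_iff, mulVecLin_apply, hA.mulVec_eigenvectorBasis]
    · intro h
      have := (hA.eigenvectorBasis).orthonormal.1 j
      rw [show (hA.eigenvectorBasis j) = 0 from by ext k; exact congrFun h k] at this
      simp at this
  set U : Matrix (Fin n) (Fin n) ℝ := (hA.eigenvectorUnitary : Matrix (Fin n) (Fin n) ℝ) with hUdef
  have hvU : v ᵥ* U = star U *ᵥ v := by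
    ext k
    simp [vecMul, mulVec, dotProduct, mul_comm]
  have key : v ⬝ᵥ A *ᵥ v = ∑ k, hA.eigenvalues k * ((star U *ᵥ v) k) ^ 2 := by
    conv_lhs => rw [hA.spectral_theorem, Unitary.conjStarAlgAut_apply]
    rw [← hUdef, ← mulVec_mulVec, ← mulVec_mulVec, dotProduct_mulVec, hvU]
    simp only [mulVec_diagonal, dotProduct, Function.comp, RCLike.ofReal_real_eq_id, id_eq]
    exact Finset.sum_congr rfl fun k _ => by ring
  have hww : (star U *ᵥ v) ⬝ᵥ (star U *ᵥ v) = v ⬝ᵥ v := by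
    conv_lhs => rw [← hvU]
    nth_rewrite 2 [hvU]
    rw [← dotProduct_mulVec, mulVec_mulVec,
      Matrix.mem_unitaryGroup_iff.mp (hA.eigenvectorUnitary).2, one_mulVec]
  rw [key]
  calc ∑ k, hA.eigenvalues k * ((star U *ᵥ v) k) ^ 2
      ≤ ∑ k, μ * ((star U *ᵥ v) k) ^ 2 := by
        apply Finset.sum_le_sum
        intro k _
        exact mul_le_mul_of_nonneg_right (heig k) (sq_nonneg _)
    _ = μ * ((star U *ᵥ v) ⬝ᵥ (star U *ᵥ v)) := by
        rw [← Finset.mul_sum]; congr 1; simp [dotProduct, sq]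
    _ = μ * (v ⬝ᵥ v) := by rw [hww]

theorem entry_bound (n : ℕ) (G : SimpleGraph (Fin n)) [DecidableRel G.Adj] (μ : ℝ)
    (hedge : G.edgeFinset.Nonempty)
    (hμ : IsSpecRad (G.adjMatrix ℝ) μ)
    (x : Fin n → ℝ)
    (hx : (G.adjMatrix ℝ).mulVec x = μ • x)
    (hunit : ∑ i, (x i) ^ 2 = 1) :
    ∀ i, |x i| ≤ 1 / Real.sqrt 2 := by
  have hA : (G.adjMatrix ℝ).IsHermitian := by
    rw [Matrix.IsHermitian, conjTranspose_eq_transpose_of_trivial]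
    exact G.isSymm_adjMatrix
  -- μ ≥ 1 from the edge
  obtain ⟨e, he⟩ := hedge
  rw [SimpleGraph.mem_edgeFinset] at he
  obtain ⟨a, b, hab, rfl⟩ : ∃ a b, G.Adj a b ∧ e = s(a, b) := by
    induction e with
    | h p q => exact ⟨p, q, he, rfl⟩
  have hne : a ≠ b := G.ne_of_adj hab
  have hμ1 : 1 ≤ μ := by
    set v : Fin n → ℝ := fun j => if j = a then 1 else if j = b then 1 else 0 with hv
    have h1 := rayleigh_le _ hA μ hμ v
    have hvnn : ∀ k, 0 ≤ v k := by intro k; simp only [hv]; positivity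
    have hvv : v ⬝ᵥ v = 2 := by
      simp only [dotProduct, hv]
      rw [Finset.sum_eq_add_of_mem a b (Finset.mem_univ a) (Finset.mem_univ b) hne ?_]
      · simp [hne, hne.symm]
        norm_num
      · intro c _ hc
        simp [hc.1, hc.2]
    have hAv : 2 ≤ v ⬝ᵥ (G.adjMatrix ℝ) *ᵥ v := by
      have hterm : ∀ j, (fun j => if j = a then (1:ℝ) else if j = b then 1 else 0) j ≤
          v j * ((G.adjMatrix ℝ) *ᵥ v) j := by
        intro j
        beta_reduce
        have hAvj : ((G.adjMatrix ℝ) *ᵥ v) j = ∑ k ∈ G.neighborFinset j, v k :=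
          G.adjMatrix_mulVec_apply _ _
        by_cases hja : j = a
        · subst hja
          have hge : (1:ℝ) ≤ ∑ k ∈ G.neighborFinset j, v k := by
            have hbmem : b ∈ G.neighborFinset j := by simpa using hab
            have h := Finset.single_le_sum (f := v) (fun k _ => hvnn k) hbmem
            have : v b = 1 := by simp [hv, hne.symm]
            linarith
          have hvj : v j = 1 := by simp [hv]
          rw [if_pos rfl, hAvj, hvj, one_mul]
          exact hge
        · by_cases hjb : j = b
          · subst hjb
            have hge : (1:ℝ) ≤ ∑ k ∈ G.neighborFinset j, v k := by
              have hamem : a ∈ G.neighborFinset j := by simpa using hab.symm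
              have h := Finset.single_le_sum (f := v) (fun k _ => hvnn k) hamem
              have : v a = 1 := by simp [hv]
              linarith
            have hvj : v j = 1 := by simp [hv, hja]
            rw [if_neg hja, if_pos rfl, hAvj, hvj, one_mul]
            exact hge
          · rw [if_neg hja, if_neg hjb]
            apply mul_nonneg (hvnn j)
            rw [hAvj]
            exact Finset.sum_nonneg fun k _ => hvnn k
      have h2 : (2:ℝ) = ∑ j, (fun j => if j = a then (1:ℝ) else if j = b then 1 else 0) j := by
        rw [Finset.sum_eq_add_of_mem a b (Finset.mem_univ a) (Finset.mem_univ b) hne ?_]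
        · simp [hne.symm]
          norm_num
        · intro c _ hc; simp [hc.1, hc.2]
      rw [h2]
      exact Finset.sum_le_sum fun j _ => hterm j
    nlinarith [hAv, h1, hvv]
  intro i
  by_cases hd : G.degree i = 0
  · -- isolated vertex: x i = 0
    have h0 : ((G.adjMatrix ℝ) *ᵥ x) i = 0 := by
      rw [G.adjMatrix_mulVec_apply]
      rw [SimpleGraph.degree, Finset.card_eq_zero] at hd
      rw [hd]
      simp
    rw [hx] at h0
    simp only [Pi.smul_apply, smul_eq_mul] at h0
    have hxi : x i = 0 := by
      rcases mul_eq_zero.mp h0 with h | h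
      · linarith
      · exact h
    rw [hxi, abs_zero]
    positivity
  · -- main case
    set d : ℝ := (G.degree i : ℝ) with hdd
    have hdpos : 0 < d := by
      simp only [hdd]
      exact_mod_cast Nat.pos_of_ne_zero hd
    have hNsub : G.neighborFinset i ⊆ Finset.univ.erase i := by
      intro k hk
      rw [Finset.mem_erase]
      exact ⟨fun h => (G.notMem_neighborFinset_self i (h ▸ hk)), Finset.mem_univ k⟩
    have hNcard : ∑ j ∈ G.neighborFinset i, (1:ℝ) = d := by
      rw [Finset.sum_const, nsmul_eq_mul, mul_one, hdd,
        SimpleGraph.card_neighborFinset_eq_degree]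
    -- μ ≥ sqrt d via star test vector
    have hμd : Real.sqrt d ≤ μ := by
      set s := Real.sqrt d with hs
      have hs0 : 0 < s := Real.sqrt_pos.mpr hdpos
      have hs2 : s ^ 2 = d := Real.sq_sqrt hdpos.le
      set v : Fin n → ℝ := fun j => if j = i then s else if j ∈ G.neighborFinset i then 1 else 0
        with hv
      have hvnn : ∀ k, 0 ≤ v k := by intro k; simp only [hv]; positivity
      have h1 := rayleigh_le _ hA μ hμ v
      have hvv : v ⬝ᵥ v = 2 * d := by
        simp only [dotProduct, hv]
        rw [← Finset.add_sum_erase _ _ (Finset.mem_univ i)]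
        have hcong : ∀ j ∈ Finset.univ.erase i,
            (if j = i then s else if j ∈ G.neighborFinset i then (1:ℝ) else 0) *
            (if j = i then s else if j ∈ G.neighborFinset i then 1 else 0) =
            if j ∈ G.neighborFinset i then 1 else 0 := by
          intro j hj
          rw [if_neg (Finset.mem_erase.mp hj).1]
          split <;> ring
        rw [Finset.sum_congr rfl hcong, if_pos rfl]
        have hsum : ∑ j ∈ Finset.univ.erase i, (if j ∈ G.neighborFinset i then (1:ℝ) else 0) =
            ∑ j ∈ G.neighborFinset i, 1 := by
          rw [Finset.sum_ite_mem]
          congr 1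
          rw [Finset.inter_comm]
          exact Finset.inter_eq_left.mpr hNsub
        rw [hsum, hNcard]
        nlinarith [hs2]
      have hAv : 2 * d * s ≤ v ⬝ᵥ (G.adjMatrix ℝ) *ᵥ v := by
        have hterm : ∀ j, (fun j => if j = i then d * s else
            if j ∈ G.neighborFinset i then s else 0) j ≤
            v j * ((G.adjMatrix ℝ) *ᵥ v) j := by
          intro j
          beta_reduce
          have hAvj : ((G.adjMatrix ℝ) *ᵥ v) j = ∑ k ∈ G.neighborFinset j, v k :=
            G.adjMatrix_mulVec_apply _ _
          by_cases hji : j = i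
          · subst hji
            have hsum : ∑ k ∈ G.neighborFinset j, v k = d := by
              have hone : ∀ k ∈ G.neighborFinset j, v k = 1 := by
                intro k hk
                have hki : k ≠ j := fun h => G.notMem_neighborFinset_self j (h ▸ hk)
                simp only [hv, if_neg hki, if_pos hk]
              rw [Finset.sum_congr rfl hone]
              exact hNcard
            have hvj : v j = s := by simp [hv]
            rw [if_pos rfl, hAvj, hsum, hvj]
            exact le_of_eq (by ring)
          · by_cases hjN : j ∈ G.neighborFinset i
            · have himem : i ∈ G.neighborFinset j := by
                rw [SimpleGraph.mem_neighborFinset] at hjN ⊢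
                exact hjN.symm
              have hvi : v i = s := by simp [hv]
              have hge : s ≤ ∑ k ∈ G.neighborFinset j, v k := by
                have h := Finset.single_le_sum (f := v) (fun k _ => hvnn k) himem
                rwa [hvi] at h
              have hvj : v j = 1 := by
                show (if j = i then s else if j ∈ G.neighborFinset i then (1:ℝ) else 0) = 1
                rw [if_neg hji, if_pos hjN]
              rw [if_neg hji, if_pos hjN, hAvj, hvj, one_mul]
              exact hge
            · rw [if_neg hji, if_neg hjN]
              apply mul_nonneg (hvnn j)
              rw [hAvj]
              exact Finset.sum_nonneg fun k _ => hvnn k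
        have h2 : 2 * d * s = ∑ j, (fun j => if j = i then d * s else
            if j ∈ G.neighborFinset i then s else 0) j := by
          rw [← Finset.add_sum_erase _ _ (Finset.mem_univ i), if_pos rfl]
          have hcong : ∀ j ∈ Finset.univ.erase i, (if j = i then d * s else
              if j ∈ G.neighborFinset i then s else 0) =
              if j ∈ G.neighborFinset i then s else 0 := by
            intro j hj
            rw [if_neg (Finset.mem_erase.mp hj).1]
          rw [Finset.sum_congr rfl hcong]
          have hsum : ∑ j ∈ Finset.univ.erase i, (if j ∈ G.neighborFinset i then s else 0) =
              ∑ j ∈ G.neighborFinset i, s := by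
            rw [Finset.sum_ite_mem]
            congr 1
            rw [Finset.inter_comm]
            exact Finset.inter_eq_left.mpr hNsub
          have hsum2 : ∑ j ∈ G.neighborFinset i, s = d * s := by
            rw [Finset.sum_const, nsmul_eq_mul,
              SimpleGraph.card_neighborFinset_eq_degree, hdd]
          rw [hsum, hsum2]
          ring
        rw [h2]
        exact Finset.sum_le_sum fun j _ => hterm j
      nlinarith [hAv, h1, hvv, hdpos, hs0]
    -- Cauchy-Schwarz at i
    have heq : μ * x i = ∑ j ∈ G.neighborFinset i, x j := by
      have h := congrFun hx i
      rw [G.adjMatrix_mulVec_apply] at h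
      simp only [Pi.smul_apply, smul_eq_mul] at h
      linarith [h]
    have hCS : (μ * x i) ^ 2 ≤ d * ∑ j ∈ G.neighborFinset i, (x j) ^ 2 := by
      rw [heq]
      have h := sq_sum_le_card_mul_sum_sq (s := G.neighborFinset i) (f := x)
      have hc : ((G.neighborFinset i).card : ℝ) = d := by
        rw [hdd, SimpleGraph.card_neighborFinset_eq_degree]
      calc (∑ j ∈ G.neighborFinset i, x j) ^ 2
          ≤ ((G.neighborFinset i).card : ℝ) * ∑ j ∈ G.neighborFinset i, (x j) ^ 2 := by
            exact_mod_cast h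
        _ = d * ∑ j ∈ G.neighborFinset i, (x j) ^ 2 := by rw [hc]
    have hrest : ∑ j ∈ G.neighborFinset i, (x j) ^ 2 ≤ 1 - (x i) ^ 2 := by
      have h1 : ∑ j ∈ G.neighborFinset i, (x j) ^ 2 ≤ ∑ j ∈ Finset.univ.erase i, (x j) ^ 2 :=
        Finset.sum_le_sum_of_subset_of_nonneg hNsub (fun k _ _ => sq_nonneg _)
      have h2 : ∑ j ∈ Finset.univ.erase i, (x j) ^ 2 = 1 - (x i) ^ 2 := by
        have h := Finset.add_sum_erase Finset.univ (fun j => (x j) ^ 2) (Finset.mem_univ i)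
        beta_reduce at h
        rw [hunit] at h
        linarith
      linarith
    -- combine
    have hxi2 : (x i) ^ 2 ≤ 1 / 2 := by
      have hμ2 : d ≤ μ ^ 2 := by
        have h0 : (0:ℝ) ≤ Real.sqrt d := Real.sqrt_nonneg d
        nlinarith [Real.sq_sqrt hdpos.le]
      nlinarith [hCS, hrest, hdpos, sq_nonneg (x i), hμ2]
    calc |x i| = Real.sqrt ((x i) ^ 2) := (Real.sqrt_sq_eq_abs _).symm
      _ ≤ Real.sqrt (1 / 2) := Real.sqrt_le_sqrt hxi2
      _ = 1 / Real.sqrt 2 := by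
          rw [one_div, one_div, ← Real.sqrt_inv]
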